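/- For integers n and k with 1 ≤ k ≤ n−1 and each integer m with 0 ≤ m ≤ n−1, the coefficient of t^m in the polynomial E_{k,n}(t) ∈ ℚ[t] equals (1/(n−1)!) · Σ_{j=0}^{k−1} Σ_{i=0}^{n−m−1} (−1)^{i+j} · C(n, j) · (k−j)^m · ⟦n−j, m+1+i−j⟧ · ⟦j, j−i⟧, where C denotes the binomial coefficient. -/

import Mathlib

open Finset Polynomial

/-- Number of lattice points of the `t`-th dilate of the hypersimplex `Δ_{k,n}`:
vectors `y ∈ {0,1,…,t}^n` with `y 0 + ⋯ + y (n-1) = k*t`. -/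
def latticeCount (n k t : ℕ) : ℕ :=
  ((Fintype.piFinset fun _ : Fin n => Finset.range (t + 1)).filter
    fun y => ∑ i, y i = k * t).card

/-- The weight of a linearly ordered block (given as a list): the number of its
entries that are strictly smaller than its first entry. -/
def blockWeight (b : List ℕ) : ℕ := b.countP fun x => decide (x < b.headI)

/-- `P` is a partition of `{1,…,n}` into `m` linearly ordered blocks: a set of `m`
nonempty duplicate-free lists, pairwise disjoint, whose entries cover `{1,…,n}`. -/
def IsLOPartition (n m : ℕ) (P : Finset (List ℕ)) : Prop :=
  P.card = m ∧
  (∀ b ∈ P, b ≠ [] ∧ b.Nodup) ∧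
  (∀ b ∈ P, ∀ c ∈ P, b ≠ c → ∀ x ∈ b, x ∉ c) ∧
  ∀ x : ℕ, (∃ b ∈ P, x ∈ b) ↔ x ∈ Finset.Icc 1 n

/-- The weight of a linearly ordered partition: sum of the weights of its blocks. -/
def partWeight (P : Finset (List ℕ)) : ℕ := ∑ b ∈ P, blockWeight b

/-- The Lah number `L(n,m)`: number of partitions of `{1,…,n}` into `m` linearly
ordered blocks. -/
noncomputable def lah (n m : ℕ) : ℕ := Nat.card {P : Finset (List ℕ) // IsLOPartition n m P}

/-- The weighted Lah number `W(ℓ,n,m)`: number of partitions of `{1,…,n}` into `m`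
linearly ordered blocks having weight `ℓ` (zero for negative `ℓ`). -/
noncomputable def weightedLah (ℓ : ℤ) (n m : ℕ) : ℕ :=
  Nat.card {P : Finset (List ℕ) // IsLOPartition n m P ∧ (partWeight P : ℤ) = ℓ}

/-- Unsigned Stirling number of the first kind `⟦a,b⟧`: number of permutations of a
set with `a` elements having exactly `b` cycles (fixed points count as cycles). -/
noncomputable def stirling1 (a b : ℕ) : ℕ :=
  Nat.card {σ : Equiv.Perm (Fin a) // σ.cycleType.card + (a - σ.support.card) = b}

/-- Unsigned Stirling number of the first kind with the convention that it vanishes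
on negative arguments. -/
noncomputable def stirlingZ (a b : ℤ) : ℤ :=
  if 0 ≤ a ∧ 0 ≤ b then stirling1 a.toNat b.toNat else 0

/-- Eulerian number `A(m,j)`: number of permutations of `{1,…,m}` with exactly `j`
descents, `A(0,0) = 1`. -/
def eulerian : ℕ → ℕ → ℕ
  | 0, 0 => 1
  | 0, _ + 1 => 0
  | _ + 1, 0 => 1
  | m + 1, j + 1 => (j + 2) * eulerian m (j + 1) + (m - j) * eulerian m j

/-- Katzman's formula: `E_{k,n}(t) = Σ_{j=0}^{k-1} (-1)^j C(n,j) binom((k-j)t+n-1-j, n-1)`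
as a polynomial in `t` over `ℚ`. -/
noncomputable def EhrhartHyp (k n : ℕ) : Polynomial ℚ :=
  (((n - 1).factorial : ℚ))⁻¹ • ∑ j ∈ Finset.range k,
    ((-1 : ℚ) ^ j * (n.choose j : ℚ)) •
      ∏ i ∈ Finset.Icc 1 (n - 1), (C ((k : ℚ) - (j : ℚ)) * X + C ((i : ℚ) - (j : ℚ)))


section AuxStirling


def S : ℕ → ℕ → ℕ
  | 0, 0 => 1
  | 0, _ + 1 => 0
  | _ + 1, 0 => 0
  | a + 1, b + 1 => a * S a (b + 1) + S a b

lemma S_zero_zero : S 0 0 = 1 := rfl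
lemma S_succ_zero (a : ℕ) : S (a + 1) 0 = 0 := rfl
lemma S_succ_succ (a b : ℕ) : S (a+1) (b+1) = a * S a (b + 1) + S a b := rfl

lemma S_eq_zero_of_lt : ∀ {a b : ℕ}, a < b → S a b = 0
  | 0, _ + 1, _ => rfl
  | a + 1, b + 1, h => by
    have h1 : a < b + 1 := by omega
    have h2 : a < b := by omega
    show a * S a (b + 1) + S a b = 0
    rw [S_eq_zero_of_lt h1, S_eq_zero_of_lt h2, mul_zero]

lemma S_pos_zero {a : ℕ} (h : 0 < a) : S a 0 = 0 := by
  cases a with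
  | zero => omega
  | succ a => exact S_succ_zero a

lemma mul_S_zero (a : ℕ) : a * S a 0 = 0 := by
  cases a with
  | zero => rfl
  | succ a => rw [S_succ_zero, mul_zero]

/-- coefficients of the rising factorial `∏_{i=0}^{a-1} (X + i)`. -/
lemma coeff_rising (a : ℕ) (b : ℕ) :
    (∏ i ∈ range a, (X + C (i : ℚ))).coeff b = (S a b : ℚ) := by
  induction a generalizing b with
  | zero =>
    simp only [range_zero, prod_empty]
    cases b with
    | zero => simp [S_zero_zero]
    | succ b => simp [coeff_one, S]
  | succ a ih =>
    rw [prod_range_succ, mul_add, coeff_add, mul_comm _ (C (a:ℚ)), coeff_C_mul, ih]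
    cases b with
    | zero =>
      rw [mul_comm (∏ i ∈ range a, (X + C (i:ℚ))) X, coeff_X_mul_zero, S_succ_zero]
      rw [show ((a:ℚ)) * (S a 0 : ℚ) = ((a * S a 0 : ℕ) : ℚ) by push_cast; ring, mul_S_zero]
      simp
    | succ b =>
      rw [coeff_mul_X, ih, S_succ_succ]
      push_cast
      ring

/-- coefficient of `p.comp (C a * X)`. -/
lemma coeff_comp_C_mul_X (p : Polynomial ℚ) (a : ℚ) (m : ℕ) :
    (p.comp (C a * X)).coeff m = p.coeff m * a ^ m := by
  induction p using Polynomial.induction_on' with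
  | add p q hp hq => simp [add_comp, hp, hq, add_mul]
  | monomial e c =>
    rw [monomial_comp]
    simp only [coeff_monomial]
    rw [mul_pow, ← C_pow, ← mul_assoc, ← C_mul, coeff_C_mul, coeff_X_pow]
    by_cases h : e = m
    · simp [h]
    · rw [if_neg h, if_neg (fun h' => h h'.symm)]
      ring

lemma coeff_falling (j b : ℕ) :
    (∏ r ∈ range j, (X - C (r:ℚ))).coeff b = (-1:ℚ)^(j+b) * S j b := by
  have h1 : (∏ r ∈ range j, (X + C (r:ℚ))).comp (C (-1:ℚ) * X)
      = C ((-1:ℚ)^j) * ∏ r ∈ range j, (X - C (r:ℚ)) := by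
    rw [Polynomial.prod_comp]
    have : ∀ r ∈ range j, (X + C (r:ℚ)).comp (C (-1:ℚ) * X)
        = (-1 : ℚ[X]) * (X - C (r:ℚ)) := by
      intro r _
      rw [add_comp, X_comp, C_comp, map_neg, map_one]; ring
    rw [Finset.prod_congr rfl this, Finset.prod_mul_distrib, Finset.prod_const]
    rw [map_pow, map_neg, map_one, Finset.card_range]
  have h2 := congrArg (fun p => Polynomial.coeff p b) h1
  simp only [coeff_comp_C_mul_X, coeff_rising] at h2
  rw [coeff_C_mul] at h2
  have h4 : (-1:ℚ)^j * (-1:ℚ)^j = 1 := by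
    rw [← pow_add]
    exact Even.neg_one_pow ⟨j, by ring⟩
  rw [pow_add]
  linear_combination (-(-1:ℚ)^j) * h2 - (∏ r ∈ range j, (X - C (r:ℚ))).coeff b * h4

lemma coeff_G (M c : ℕ) :
    (∏ s ∈ range M, (X + C ((s:ℚ)+1))).coeff c = (S (M+1) (c+1) : ℚ) := by
  have h1 : (∏ i ∈ range (M+1), (X + C (i:ℚ)))
      = (∏ s ∈ range M, (X + C ((s:ℚ)+1))) * X := by
    rw [Finset.prod_range_succ' (fun i => X + C ((i:ℚ))) M]
    push_cast
    simp
  have := coeff_rising (M+1) (c+1)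
  rw [h1, coeff_mul_X] at this
  exact this

lemma coeff_Qj (N j m : ℕ) (hj : j ≤ N) (a : ℚ) :
    (∏ i ∈ Icc 1 N, (C a * X + C ((i:ℚ) - (j:ℚ)))).coeff m
    = a^m * ∑ b ∈ range (m+1),
        (-1:ℚ)^(j+b) * S j b * S (N - j + 1) (m - b + 1) := by
  -- step 1: write as composition
  have hcomp : (∏ i ∈ Icc 1 N, (C a * X + C ((i:ℚ) - (j:ℚ))))
      = (∏ i ∈ Icc 1 N, (X + C ((i:ℚ) - (j:ℚ)))).comp (C a * X) := by
    rw [Polynomial.prod_comp]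
    refine Finset.prod_congr rfl fun i _ => ?_
    rw [add_comp, X_comp, C_comp]
  -- step 2: split the product
  have hsplit : (∏ i ∈ Icc 1 N, (X + C ((i:ℚ) - (j:ℚ))))
      = (∏ r ∈ range j, (X - C (r:ℚ))) * (∏ s ∈ range (N - j), (X + C ((s:ℚ)+1))) := by
    have h0 : Icc 1 N = Ico 1 (N+1) := by rw [Finset.Ico_add_one_right_eq_Icc]
    rw [h0, ← Finset.prod_Ico_consecutive _ (by omega : 1 ≤ j + 1) (by omega : j + 1 ≤ N + 1)]
    congr 1
    · rw [Finset.prod_Ico_eq_prod_range]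
      simp only [Nat.add_sub_cancel]
      rw [← Finset.prod_range_reflect (fun r => X - C (r:ℚ)) j]
      refine Finset.prod_congr rfl fun r hr => ?_
      rw [Finset.mem_range] at hr
      have : ((j - 1 - r : ℕ) : ℚ) = (j:ℚ) - 1 - r := by
        have h1 : (1:ℕ) + r ≤ j := by omega
        push_cast [Nat.sub_sub, Nat.cast_sub h1]
        ring
      rw [this]
      have : ((1 + r : ℕ) : ℚ) = 1 + r := by push_cast; ring
      rw [this, map_sub, map_sub, map_add, map_one]
      simp only [map_add, map_sub, map_neg, map_one]
      ring
    · rw [Finset.prod_Ico_eq_prod_range]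
      have : N + 1 - (j + 1) = N - j := by omega
      rw [this]
      refine Finset.prod_congr rfl fun s _ => ?_
      have : ((j + 1 + s : ℕ) : ℚ) = j + 1 + s := by push_cast; ring
      rw [this]
      congr 1
      rw [map_sub, map_add, map_add, map_one]
      simp only [map_add, map_sub, map_neg, map_one]
      ring
  rw [hcomp, coeff_comp_C_mul_X, hsplit, Polynomial.coeff_mul,
    Finset.Nat.sum_antidiagonal_eq_sum_range_succ_mk]
  rw [Finset.mul_sum]
  refine Eq.trans (Finset.sum_mul _ _ _) (Finset.sum_congr rfl fun b hb => ?_)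
  simp only
  rw [coeff_falling, coeff_G]
  ring

section PermAux
open Equiv Equiv.Perm

variable {α : Type*} [Fintype α] [DecidableEq α]


/-- number of cycles of a permutation, counting fixed points as cycles -/
def numCycles (σ : Perm α) : ℕ :=
  σ.cycleType.card + (Fintype.card α - σ.support.card)

lemma numCycles_swap_mul {σ : Perm α} {x : α} (hx : σ x ≠ x) :
    numCycles (swap x (σ x) * σ) = numCycles σ + 1 := by
  classical
  set c := σ.cycleOf x with hc
  have hmem : c ∈ σ.cycleFactorsFinset :=
    (cycleOf_mem_cycleFactorsFinset_iff).2 (mem_support.2 hx)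
  have hcyc : c.IsCycle := isCycle_cycleOf σ hx
  have hcx : c x = σ x := cycleOf_apply_self σ x
  have hcxne : c x ≠ x := by rw [hcx]; exact hx
  set d := σ * c⁻¹ with hd
  have hdisj : Disjoint d c := disjoint_mul_inv_of_mem_cycleFactorsFinset hmem
  have hσ : σ = d * c := by rw [hd]; group
  have hxsupp : x ∈ c.support := mem_support.2 hcxne
  have hswapsupp : (swap x (c x)).support ⊆ c.support := by
    intro z hz
    rw [support_swap (Ne.symm hcxne)] at hz
    rcases Finset.mem_insert.1 hz with h | h
    · rw [h]; exact hxsupp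
    · rw [Finset.mem_singleton.1 h]; rw [apply_mem_support]; exact hxsupp
  have hdisj2 : Disjoint d (swap x (c x)) := by
    rw [disjoint_iff_disjoint_support] at hdisj ⊢
    exact Finset.disjoint_of_subset_right hswapsupp hdisj
  have hcomm : swap x (c x) * d = d * swap x (c x) := (hdisj2.commute.symm).eq
  have hprod : swap x (σ x) * σ = d * (swap x (c x) * c) := by
    rw [← mul_assoc, ← hcomm, mul_assoc, ← hσ, hcx]
  have hsuppσ : σ.support.card = d.support.card + c.support.card := by
    rw [hσ]; exact hdisj.card_support_mul
  have e1 : σ.cycleType.card = d.cycleType.card + 1 := by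
    rw [hσ, hdisj.cycleType_mul, Multiset.card_add, hcyc.cycleType]; simp
  have hle : σ.support.card ≤ Fintype.card α := Finset.card_le_univ _
  have hsc2 : 2 ≤ c.support.card := hcyc.two_le_card_support
  by_cases hcc : c (c x) = x
  · -- c is a swap
    have hcswap : c = swap x (c x) := hcyc.eq_swap_of_apply_apply_eq_self hcxne hcc
    have h1 : swap x (c x) * c = 1 := by
      nth_rewrite 2 [hcswap]; exact swap_mul_self _ _
    have hcard2 : c.support.card = 2 := by
      rw [hcswap]; exact card_support_swap (Ne.symm hcxne)
    have h2 : swap x (σ x) * σ = d := by rw [hprod, h1, mul_one]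
    rw [h2]
    unfold numCycles
    omega
  · -- general case
    set e := swap x (c x) * c with he'
    have he : e.IsCycle := hcyc.swap_mul hcxne hcc
    have hsuppe : e.support = c.support \ {x} := support_swap_mul_eq c x hcc
    have hcarde : e.support.card = c.support.card - 1 := by
      rw [hsuppe, Finset.card_sdiff_of_subset (Finset.singleton_subset_iff.2 hxsupp),
        Finset.card_singleton]
    have hdisj3 : Disjoint d e := by
      rw [disjoint_iff_disjoint_support] at hdisj ⊢
      refine Finset.disjoint_of_subset_right ?_ hdisj
      rw [hsuppe]; exact Finset.sdiff_subset
    have h2 : swap x (σ x) * σ = d * e := hprod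
    rw [h2]
    have e2 : (d * e).cycleType.card = d.cycleType.card + 1 := by
      rw [hdisj3.cycleType_mul, Multiset.card_add, he.cycleType]; simp
    have e3 : (d * e).support.card = d.support.card + e.support.card :=
      hdisj3.card_support_mul
    unfold numCycles
    omega

/-- the equiv between `Fin n` and nonzero elements of `Fin (n+1)` -/
def finSuccNeZero (n : ℕ) : Fin n ≃ {x : Fin (n + 1) // x ≠ 0} where
  toFun i := ⟨i.succ, Fin.succ_ne_zero i⟩
  invFun x := x.1.pred x.2
  left_inv i := by simp
  right_inv x := by simp

lemma decomposeFin_zero_eq_extendDomain {n : ℕ} (e : Perm (Fin n)) :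
    Equiv.Perm.decomposeFin.symm (0, e) = e.extendDomain (finSuccNeZero n) := by
  ext x
  refine Fin.cases ?_ (fun i => ?_) x
  · rw [Equiv.Perm.decomposeFin_symm_apply_zero]
    rw [Equiv.Perm.extendDomain_apply_not_subtype _ _ (by simp)]
  · rw [Equiv.Perm.decomposeFin_symm_apply_succ,
      Equiv.Perm.extendDomain_apply_subtype e (finSuccNeZero n) (Fin.succ_ne_zero i)]
    simp [finSuccNeZero]

lemma numCycles_decomposeFin_zero {n : ℕ} (e : Perm (Fin n)) :
    numCycles (Equiv.Perm.decomposeFin.symm (0, e)) = numCycles e + 1 := by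
  rw [decomposeFin_zero_eq_extendDomain]
  unfold numCycles
  rw [Equiv.Perm.cycleType_extendDomain]
  have hsupp : (e.extendDomain (finSuccNeZero n)).support.card = e.support.card := by
    exact Equiv.Perm.card_support_extend_domain _
  rw [hsupp]
  have : e.support.card ≤ Fintype.card (Fin n) := Finset.card_le_univ _
  simp only [Fintype.card_fin] at *
  omega

lemma numCycles_decomposeFin_succ {n : ℕ} (e : Perm (Fin n)) (p : Fin (n + 1))
    (hp : p ≠ 0) :
    numCycles (Equiv.Perm.decomposeFin.symm (p, e)) = numCycles e := by
  set ρ := Equiv.Perm.decomposeFin.symm (p, e) with hρ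
  have hρ0 : ρ 0 = p := Equiv.Perm.decomposeFin_symm_apply_zero p e
  have hfix : ρ 0 ≠ 0 := by rw [hρ0]; exact hp
  have hkey : swap 0 (ρ 0) * ρ = Equiv.Perm.decomposeFin.symm (0, e) := by
    ext x
    refine Fin.cases ?_ (fun i => ?_) x
    · simp [Equiv.Perm.decomposeFin_symm_apply_zero, hρ0]
    · simp [Perm.mul_apply, hρ, Equiv.Perm.decomposeFin_symm_apply_succ,
        Equiv.Perm.decomposeFin_symm_apply_zero, Equiv.swap_apply_self]
  have := numCycles_swap_mul hfix
  rw [hkey, numCycles_decomposeFin_zero] at this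
  omega

lemma stirling1_eq_card (a b : ℕ) :
    stirling1 a b = Nat.card {σ : Perm (Fin a) // numCycles σ = b} :=
  Nat.card_congr (Equiv.subtypeEquivRight (fun σ => by simp [numCycles]))

lemma stirling1_succ (a c : ℕ) :
    stirling1 (a + 1) c
      = a * stirling1 a c + Nat.card {e : Perm (Fin a) // numCycles e + 1 = c} := by
  rw [stirling1_eq_card, stirling1_eq_card]
  have e1 : {σ : Perm (Fin (a+1)) // numCycles σ = c}
      ≃ {x : Fin (a+1) × Perm (Fin a) // numCycles (Equiv.Perm.decomposeFin.symm x) = c} :=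
    Equiv.subtypeEquiv Equiv.Perm.decomposeFin (fun σ => by
      rw [Equiv.symm_apply_apply])
  have e2 : {x : Fin (a+1) × Perm (Fin a) // numCycles (Equiv.Perm.decomposeFin.symm x) = c}
      ≃ Σ p : Fin (a+1), {e : Perm (Fin a) // numCycles (Equiv.Perm.decomposeFin.symm (p, e)) = c} :=
    Equiv.subtypeProdEquivSigmaSubtype
      (fun p e => numCycles (Equiv.Perm.decomposeFin.symm (p, e)) = c)
  have hsig : Nat.card ((p : Fin (a+1)) × {e : Perm (Fin a) //
      numCycles (Equiv.Perm.decomposeFin.symm (p, e)) = c})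
      = ∑ p : Fin (a+1), Nat.card {e : Perm (Fin a) //
          numCycles (Equiv.Perm.decomposeFin.symm (p, e)) = c} := by
    simp [Nat.card_eq_fintype_card]
  rw [Nat.card_congr (e1.trans e2), hsig, Fin.sum_univ_succ]
  have h0 : Nat.card {e : Perm (Fin a) //
      numCycles (Equiv.Perm.decomposeFin.symm ((0 : Fin (a+1)), e)) = c}
      = Nat.card {e : Perm (Fin a) // numCycles e + 1 = c} :=
    Nat.card_congr (Equiv.subtypeEquivRight (fun e => by
      rw [numCycles_decomposeFin_zero]))
  have hsucc : ∀ i : Fin a, Nat.card {e : Perm (Fin a) //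
      numCycles (Equiv.Perm.decomposeFin.symm ((i.succ : Fin (a+1)), e)) = c}
      = Nat.card {e : Perm (Fin a) // numCycles e = c} := fun i =>
    Nat.card_congr (Equiv.subtypeEquivRight (fun e => by
      rw [numCycles_decomposeFin_succ e _ (Fin.succ_ne_zero i)]))
  rw [h0, Finset.sum_congr rfl (fun i _ => hsucc i), Finset.sum_const, Finset.card_univ,
    Fintype.card_fin, smul_eq_mul]
  ring

lemma numCycles_fin_zero (σ : Perm (Fin 0)) : numCycles σ = 0 := by
  have h1 : σ = 1 := Subsingleton.elim σ 1
  subst h1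
  simp [numCycles]


lemma stirling1_eq_S : ∀ a b, stirling1 a b = S a b := by
  intro a
  induction a with
  | zero =>
    intro b
    rw [stirling1_eq_card]
    cases b with
    | zero =>
      rw [show S 0 0 = 1 from rfl]
      rw [Nat.card_congr (Equiv.subtypeUnivEquiv (fun σ => numCycles_fin_zero σ))]
      simp [Nat.card_eq_fintype_card]
    | succ b =>
      rw [show S 0 (b+1) = 0 from rfl]
      have : IsEmpty {σ : Perm (Fin 0) // numCycles σ = b + 1} :=
        ⟨fun ⟨σ, h⟩ => by rw [numCycles_fin_zero σ] at h; exact Nat.succ_ne_zero b h.symm⟩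
      exact Nat.card_of_isEmpty
  | succ a ih =>
    intro b
    cases b with
    | zero =>
      rw [stirling1_succ, ih 0, show S (a+1) 0 = 0 from rfl]
      have : IsEmpty {e : Perm (Fin a) // numCycles e + 1 = 0} :=
        ⟨fun ⟨e, h⟩ => Nat.succ_ne_zero _ h⟩
      rw [Nat.card_of_isEmpty, mul_S_zero]
    | succ b =>
      rw [stirling1_succ, ih (b+1), show S (a+1) (b+1) = a * S a (b+1) + S a b from rfl]
      congr 1
      rw [← ih b, stirling1_eq_card]
      exact Nat.card_congr (Equiv.subtypeEquivRight (fun e => by omega))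

end PermAux

lemma stirlingZ_of_neg {x y : ℤ} (h : y < 0) : stirlingZ x y = 0 := by
  unfold stirlingZ
  rw [if_neg (fun hc => absurd hc.2 (not_le.2 h))]

lemma stirlingZ_nonneg {x y : ℤ} (hx : 0 ≤ x) (hy : 0 ≤ y) :
    stirlingZ x y = S x.toNat y.toNat := by
  unfold stirlingZ
  rw [if_pos ⟨hx, hy⟩, stirling1_eq_S]

lemma stirlingZ_of_gt {x y : ℤ} (hx : 0 ≤ x) (h : x < y) : stirlingZ x y = 0 := by
  rw [stirlingZ_nonneg hx (le_of_lt (lt_of_le_of_lt hx h))]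
  rw [S_eq_zero_of_lt (by omega : x.toNat < y.toNat)]
  simp

/-- the per-`j` reindexing identity -/
lemma perj (n j m : ℕ) (hj : j + 2 ≤ n) (hm : m ≤ n - 1) :
    (-1:ℚ)^j * ∑ b ∈ range (m+1), (-1:ℚ)^(j+b) * S j b * S (n-j) (m-b+1)
    = ∑ i ∈ range (n - m),
        (-1 : ℚ) ^ (i + j) *
          (stirlingZ ((n : ℤ) - (j : ℤ)) ((m : ℤ) + 1 + (i : ℤ) - (j : ℤ)) : ℚ) *
          (stirlingZ (j : ℤ) ((j : ℤ) - (i : ℤ)) : ℚ) := by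
  have hnj : (0:ℤ) ≤ (n:ℤ) - j := by
    have : j ≤ n := by omega
    omega
  set g : ℕ → ℚ := fun i =>
    (-1 : ℚ) ^ (i + j) *
      (stirlingZ ((n : ℤ) - (j : ℤ)) ((m : ℤ) + 1 + (i : ℤ) - (j : ℤ)) : ℚ) *
      (stirlingZ (j : ℤ) ((j : ℤ) - (i : ℤ)) : ℚ) with hg
  set h : ℕ → ℚ := fun b =>
    (-1:ℚ)^j * ((-1:ℚ)^(j+b) * S j b *
      (stirlingZ ((n : ℤ) - (j : ℤ)) ((m : ℤ) + 1 - (b : ℤ)) : ℚ)) with hh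
  -- F2 : h b = 0 for b > m
  have F2 : ∀ b, m < b → h b = 0 := by
    intro b hb
    rw [hh]
    simp only
    rcases Nat.lt_or_ge (m+1) b with h' | h'
    · rw [stirlingZ_of_neg (by omega)]
      simp
    · have hb' : b = m + 1 := by omega
      subst hb'
      rw [show (m:ℤ) + 1 - (m+1:ℕ) = 0 by push_cast; ring]
      rw [stirlingZ_nonneg hnj le_rfl]
      rw [show ((0:ℤ)).toNat = 0 from rfl, S_pos_zero (by omega : 0 < ((n:ℤ)-j).toNat)]
      simp
  -- F3 : h b = 0 for b > j
  have F3 : ∀ b, j < b → h b = 0 := by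
    intro b hb
    rw [hh]; simp only
    rw [S_eq_zero_of_lt hb]
    simp
  -- F6 : g i = 0 for i ≥ n - m
  have F6 : ∀ i, n - m ≤ i → g i = 0 := by
    intro i hi
    rw [hg]; simp only
    rw [stirlingZ_of_gt hnj (by omega : (n:ℤ) - j < (m:ℤ) + 1 + i - j)]
    simp
  -- F5 : g i = 0 for i > j
  have F5 : ∀ i, j < i → g i = 0 := by
    intro i hi
    rw [hg]; simp only
    rw [stirlingZ_of_neg (by omega : (j:ℤ) - i < 0)]
    simp
  -- F4 : g (j - b) = h b for b ≤ j
  have F4 : ∀ b, b ≤ j → g (j - b) = h b := by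
    intro b hb
    rw [hg, hh]; simp only
    have c1 : ((j - b : ℕ) : ℤ) = (j:ℤ) - b := by omega
    have c2 : (m:ℤ) + 1 + ((j-b:ℕ):ℤ) - j = (m:ℤ) + 1 - b := by omega
    have c3 : (j:ℤ) - ((j-b:ℕ):ℤ) = (b:ℤ) := by omega
    rw [c2, c3]
    rw [stirlingZ_nonneg (by omega : (0:ℤ) ≤ (j:ℤ)) (by omega : (0:ℤ) ≤ (b:ℤ))]
    rw [show ((j:ℤ)).toNat = j from rfl, show ((b:ℤ)).toNat = b by omega]
    have hsign : (-1:ℚ)^(j - b + j) = (-1:ℚ)^j * (-1:ℚ)^(j+b) := by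
      have hc : (-1:ℚ)^(j - b + j) * (-1:ℚ)^b = (-1:ℚ)^j * (-1:ℚ)^(j+b) * (-1:ℚ)^b := by
        rw [← pow_add, ← pow_add, ← pow_add, show j - b + j + b = 2*j by omega,
          show j + (j + b) + b = 2*j + 2*b by omega]
        rw [Even.neg_one_pow ⟨j, by ring⟩, Even.neg_one_pow ⟨j+b, by ring⟩]
      have hne : (-1:ℚ)^b ≠ 0 := by
        apply pow_ne_zero; norm_num
      exact mul_right_cancel₀ hne hc
    rw [hsign]
    push_cast
    ring
  -- now the chain
  have hM1 : range (m+1) ⊆ range (max (j+1) (m+1)) := by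
    apply Finset.range_subset_range.2; omega
  have step1 : ∑ b ∈ range (m+1), h b = ∑ b ∈ range (max (j+1) (m+1)), h b :=
    Finset.sum_subset hM1 (fun b _ hb => F2 b (by
      rw [Finset.mem_range] at hb; omega))
  have hM2 : range (j+1) ⊆ range (max (j+1) (m+1)) := by
    apply Finset.range_subset_range.2; omega
  have step2 : ∑ b ∈ range (j+1), h b = ∑ b ∈ range (max (j+1) (m+1)), h b :=
    Finset.sum_subset hM2 (fun b _ hb => F3 b (by
      rw [Finset.mem_range] at hb; omega))
  have step3 : ∑ b ∈ range (j+1), h b = ∑ b ∈ range (j+1), g (j - b) :=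
    Finset.sum_congr rfl (fun b hb => (F4 b (by rw [Finset.mem_range] at hb; omega)).symm)
  have step4 : ∑ b ∈ range (j+1), g (j + 1 - 1 - b) = ∑ i ∈ range (j+1), g i :=
    Finset.sum_range_reflect g (j+1)
  have step4' : ∑ b ∈ range (j+1), g (j - b) = ∑ i ∈ range (j+1), g i := by
    rw [← step4]
    exact Finset.sum_congr rfl fun b _ => congrArg g (by omega)
  have hM3 : range (j+1) ⊆ range (max (j+1) (n-m)) := by
    apply Finset.range_subset_range.2; omega
  have step5 : ∑ i ∈ range (j+1), g i = ∑ i ∈ range (max (j+1) (n-m)), g i :=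
    Finset.sum_subset hM3 (fun i _ hi => F5 i (by rw [Finset.mem_range] at hi; omega))
  have hM4 : range (n-m) ⊆ range (max (j+1) (n-m)) := by
    apply Finset.range_subset_range.2; omega
  have step6 : ∑ i ∈ range (n-m), g i = ∑ i ∈ range (max (j+1) (n-m)), g i :=
    Finset.sum_subset hM4 (fun i _ hi => F6 i (by rw [Finset.mem_range] at hi; omega))
  have lhs_eq : (-1:ℚ)^j * ∑ b ∈ range (m+1), (-1:ℚ)^(j+b) * S j b * S (n-j) (m-b+1)
      = ∑ b ∈ range (m+1), h b := by
    rw [Finset.mul_sum]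
    refine Finset.sum_congr rfl fun b hb => ?_
    rw [Finset.mem_range] at hb
    rw [hh]; simp only
    rw [stirlingZ_nonneg hnj (by omega : (0:ℤ) ≤ (m:ℤ) + 1 - b)]
    rw [show ((n:ℤ) - j).toNat = n - j by omega,
      show ((m:ℤ) + 1 - b).toNat = m - b + 1 by omega]
    push_cast
    ring
  rw [lhs_eq, step1, ← step2, step3, step4', step5, ← step6]

end AuxStirling

/-- formula for the coefficient of `t^m` in `E_{k,n}(t)`. -/
theorem stmt_14 (n k m : ℕ) (hk : 1 ≤ k) (hkn : k ≤ n - 1) (hm : m ≤ n - 1) :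
    (EhrhartHyp k n).coeff m =
      (1 / ((n - 1).factorial : ℚ)) *
        ∑ j ∈ Finset.range k, ∑ i ∈ Finset.range (n - m),
          (-1 : ℚ) ^ (i + j) * (n.choose j : ℚ) * ((k - j : ℕ) : ℚ) ^ m *
            (stirlingZ ((n : ℤ) - (j : ℤ)) ((m : ℤ) + 1 + (i : ℤ) - (j : ℤ)) : ℚ) *
            (stirlingZ (j : ℤ) ((j : ℤ) - (i : ℤ)) : ℚ) := by
  have hn2 : 2 ≤ n := by omega
  rw [EhrhartHyp, Polynomial.coeff_smul, Polynomial.finset_sum_coeff]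
  rw [one_div, smul_eq_mul]
  congr 1
  refine Finset.sum_congr rfl fun j hj => ?_
  rw [Finset.mem_range] at hj
  have hjk : j + 1 ≤ k := hj
  have hj2 : j + 2 ≤ n := by omega
  have hjN : j ≤ n - 1 := by omega
  rw [Polynomial.coeff_smul, smul_eq_mul, coeff_Qj (n-1) j m hjN ((k:ℚ) - j)]
  have hcast : ((k:ℚ) - (j:ℚ)) = ((k - j : ℕ) : ℚ) := by
    rw [Nat.cast_sub (by omega : j ≤ k)]
  have hNj : n - 1 - j + 1 = n - j := by omega
  rw [hNj, hcast]
  have := perj n j m hj2 hm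
  calc (-1:ℚ)^j * (n.choose j : ℚ) *
        (((k - j : ℕ):ℚ)^m * ∑ b ∈ range (m+1), (-1:ℚ)^(j+b) * S j b * S (n-j) (m-b+1))
      = (n.choose j : ℚ) * ((k - j : ℕ):ℚ)^m *
        ((-1:ℚ)^j * ∑ b ∈ range (m+1), (-1:ℚ)^(j+b) * S j b * S (n-j) (m-b+1)) := by ring
    _ = (n.choose j : ℚ) * ((k - j : ℕ):ℚ)^m *
        ∑ i ∈ range (n - m), (-1 : ℚ) ^ (i + j) *
          (stirlingZ ((n : ℤ) - (j : ℤ)) ((m : ℤ) + 1 + (i : ℤ) - (j : ℤ)) : ℚ) *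
          (stirlingZ (j : ℤ) ((j : ℤ) - (i : ℤ)) : ℚ) := by rw [this]
    _ = _ := by
        rw [Finset.mul_sum]
        refine Finset.sum_congr rfl fun i _ => ?_
        ring
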